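/- arXiv:2604.23591 — 2 statements merged into one kernel-verified Lean document; each statement's English description precedes it below -/
import Mathlib

section
/- Let $v_1,\ldots,v_d$ be a basis of $\mathbb{R}^d$ with dual basis $v_1^\ast,\ldots,v_d^\ast$ (so $(v_j^\ast, v_k) = \delta_{jk}$). Fix $i$ and a vector $w$ in the cone generated by $v_1,\ldots,v_d$ with $(v_i^\ast, w) > 0$. Let $L = \{l \neq i : (v_l^\ast, w) = 0\}$ and $R = \{r \neq i : (v_r^\ast, w) \neq 0\}$. For $j \in R \cup \{i\}$ set $u_j = v_j^\ast/(v_j^\ast, w)$, and for $l \in L$ set $u_l = v_l^\ast$. Let $\delta_i$ be the cone generated by $v_1,\ldots,v_{i-1},-w,v_{i+1},\ldots,v_d$. Then the dual cone $\delta_i^\vee = \{a : (a,x) \geq 0 \text{ for all } x \in \delta_i\}$ equals the cone generated by $-u_i$, the $u_l$ for $l \in L$, and the vectors $u_r - u_i$ for $r \in R$. -/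
/-- Standard pairing on `ℝ^d`. -/
def dot {d : ℕ} (x y : Fin d → ℝ) : ℝ := ∑ i, x i * y i

/-- The cone generated by a set: all finite nonnegative combinations. -/
def coneOf {d : ℕ} (S : Set (Fin d → ℝ)) : Set (Fin d → ℝ) :=
  {x | ∃ (n : ℕ) (c : Fin n → ℝ) (y : Fin n → (Fin d → ℝ)),
    (∀ j, 0 ≤ c j) ∧ (∀ j, y j ∈ S) ∧ x = ∑ j, c j • y j}

/-- The dual cone of a set. -/
def dualCone {d : ℕ} (S : Set (Fin d → ℝ)) : Set (Fin d → ℝ) :=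
  {a | ∀ x ∈ S, 0 ≤ dot a x}

open Matrix

lemma dot_comm' {d : ℕ} (x y : Fin d → ℝ) : dot x y = dot y x := by
  simp [dot, mul_comm]

lemma dot_neg_right' {d : ℕ} (x y : Fin d → ℝ) : dot x (-y) = -dot x y := by
  simp [dot]

lemma dot_neg_left' {d : ℕ} (x y : Fin d → ℝ) : dot (-x) y = -dot x y := by
  simp [dot]

lemma dot_smul_left' {d : ℕ} (c : ℝ) (x y : Fin d → ℝ) : dot (c • x) y = c * dot x y := by
  simp [dot, Finset.mul_sum, mul_assoc]

lemma dot_sub_left' {d : ℕ} (x y z : Fin d → ℝ) : dot (x - y) z = dot x z - dot y z := by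
  simp [dot, sub_mul, Finset.sum_sub_distrib]

lemma dot_sum_smul {d n : ℕ} (a : Fin d → ℝ) (c : Fin n → ℝ) (y : Fin n → Fin d → ℝ) :
    dot a (∑ j, c j • y j) = ∑ j, c j * dot a (y j) := by
  simp only [dot, Finset.sum_apply, Pi.smul_apply, smul_eq_mul, Finset.mul_sum]
  rw [Finset.sum_comm]
  exact Finset.sum_congr rfl fun j _ => Finset.sum_congr rfl fun t _ => by ring

lemma mem_dualCone_coneOf {d : ℕ} (S : Set (Fin d → ℝ)) (a : Fin d → ℝ) :
    a ∈ dualCone (coneOf S) ↔ ∀ s ∈ S, 0 ≤ dot a s := by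
  constructor
  · intro h s hs
    apply h
    exact ⟨1, fun _ => 1, fun _ => s, fun _ => zero_le_one, fun _ => hs, by simp⟩
  · rintro h x ⟨n, c, y, hc, hy, rfl⟩
    rw [dot_sum_smul]
    exact Finset.sum_nonneg fun j _ => mul_nonneg (hc j) (h _ (hy j))

lemma repr_lemmas {d : ℕ} (v vstar : Fin d → (Fin d → ℝ))
    (hdual : ∀ j k, dot (vstar j) (v k) = if j = k then 1 else 0) :
    (∀ x : Fin d → ℝ, ∑ k, (dot x (v k)) • vstar k = x) ∧
    (∀ x : Fin d → ℝ, ∑ k, (dot (vstar k) x) • v k = x) := by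
  have hmat : (Matrix.of (fun j k => vstar j k)) * (Matrix.of (fun j k => v j k))ᵀ = 1 := by
    ext j k
    simpa [Matrix.mul_apply, Matrix.one_apply, dot] using hdual j k
  have h2 : (Matrix.of (fun j k => v j k))ᵀ * (Matrix.of (fun j k => vstar j k)) = 1 :=
    mul_eq_one_comm.mp hmat
  have e2 : ∀ s t, ∑ j, v j s * vstar j t = if s = t then (1:ℝ) else 0 := by
    intro s t
    have := congrFun (congrFun h2 s) t
    simpa [Matrix.mul_apply, Matrix.one_apply, Matrix.transpose_apply] using this
  have h3 : (Matrix.of (fun j k => vstar j k))ᵀ * (Matrix.of (fun j k => v j k)) = 1 := by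
    calc (Matrix.of (fun j k => vstar j k))ᵀ * (Matrix.of (fun j k => v j k))
        = ((Matrix.of (fun j k => v j k))ᵀ * (Matrix.of (fun j k => vstar j k)))ᵀ := by
          simp [Matrix.transpose_mul]
      _ = 1 := by rw [h2]; simp
  have e3 : ∀ s t, ∑ j, vstar j s * v j t = if s = t then (1:ℝ) else 0 := by
    intro s t
    have := congrFun (congrFun h3 s) t
    simpa [Matrix.mul_apply, Matrix.one_apply, Matrix.transpose_apply] using this
  constructor
  · intro x
    funext t
    simp only [Finset.sum_apply, Pi.smul_apply, smul_eq_mul, dot, Finset.sum_mul]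
    rw [Finset.sum_comm]
    calc ∑ s, ∑ k, x s * v k s * vstar k t
        = ∑ s, x s * (∑ k, v k s * vstar k t) := by
          exact Finset.sum_congr rfl fun s _ => by
            rw [Finset.mul_sum]; exact Finset.sum_congr rfl fun k _ => by ring
      _ = x t := by simp [e2]
  · intro x
    funext t
    simp only [Finset.sum_apply, Pi.smul_apply, smul_eq_mul, dot, Finset.sum_mul]
    rw [Finset.sum_comm]
    calc ∑ s, ∑ k, vstar k s * x s * v k t
        = ∑ s, x s * (∑ k, vstar k s * v k t) := by
          exact Finset.sum_congr rfl fun s _ => by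
            rw [Finset.mul_sum]; exact Finset.sum_congr rfl fun k _ => by ring
      _ = x t := by simp [e3]

theorem stmt_1 {d : ℕ} (v vstar : Fin d → (Fin d → ℝ))
    (hdual : ∀ j k, dot (vstar j) (v k) = if j = k then 1 else 0)
    (i : Fin d) (w : Fin d → ℝ) (hw : w ∈ coneOf (Set.range v))
    (hwi : 0 < dot (vstar i) w)
    (u : Fin d → (Fin d → ℝ))
    (hu : ∀ j, u j = if dot (vstar j) w = 0 then vstar j
      else (dot (vstar j) w)⁻¹ • vstar j) :
    dualCone (coneOf (Set.range (Function.update v i (-w)))) =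
      coneOf (insert (-(u i))
        ((u '' {l | l ≠ i ∧ dot (vstar l) w = 0}) ∪
          ((fun r => u r - u i) '' {r | r ≠ i ∧ dot (vstar r) w ≠ 0}))) := by
  obtain ⟨hrepr1, hrepr2⟩ := repr_lemmas v vstar hdual
  have hwir : dot (vstar i) w ≠ 0 := ne_of_gt hwi
  have hui : u i = (dot (vstar i) w)⁻¹ • vstar i := by rw [hu i, if_neg hwir]
  have hwk : ∀ k, 0 ≤ dot (vstar k) w := by
    intro k
    obtain ⟨n, c, y, hc, hy, hweq⟩ := hw
    rw [hweq, dot_sum_smul]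
    apply Finset.sum_nonneg
    intro j _
    obtain ⟨m, hm⟩ := hy j
    rw [← hm, hdual]
    exact mul_nonneg (hc j) (by split <;> norm_num)
  have hdaw : ∀ a : Fin d → ℝ, dot a w = ∑ k, dot a (v k) * dot (vstar k) w := by
    intro a
    conv_lhs => rw [← hrepr2 w]
    rw [dot_sum_smul]
    exact Finset.sum_congr rfl fun k _ => mul_comm _ _
  have hupd : ∀ k, Function.update v i (-w) k = if k = i then -w else v k :=
    fun k => Function.update_apply v i (-w) k
  ext a
  rw [mem_dualCone_coneOf]
  constructor
  · -- forward inclusion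
    intro h
    have h1 : ∀ k, k ≠ i → 0 ≤ dot a (v k) := by
      intro k hk
      have := h _ ⟨k, rfl⟩
      rwa [hupd, if_neg hk] at this
    have h2 : dot a w ≤ 0 := by
      have := h _ ⟨i, rfl⟩
      rw [hupd, if_pos rfl, dot_neg_right'] at this
      linarith
    refine ⟨d + 1,
      Fin.snoc (fun k => if k = i then 0 else if dot (vstar k) w = 0 then dot a (v k)
        else dot (vstar k) w * dot a (v k)) (-(dot a w)),
      Fin.snoc (fun k => if k = i then -(u i) else if dot (vstar k) w = 0 then u k
        else u k - u i) (-(u i)), ?_, ?_, ?_⟩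
    · intro j
      induction j using Fin.lastCases with
      | last => simp only [Fin.snoc_last]; linarith
      | cast k =>
        simp only [Fin.snoc_castSucc]
        split_ifs with ha hb
        · exact le_rfl
        · exact h1 k ha
        · exact mul_nonneg (hwk k) (h1 k ha)
    · intro j
      induction j using Fin.lastCases with
      | last => simp only [Fin.snoc_last]; exact Set.mem_insert _ _
      | cast k =>
        simp only [Fin.snoc_castSucc]
        split_ifs with ha hb
        · exact Set.mem_insert _ _
        · exact Set.mem_insert_of_mem _ (Or.inl ⟨k, ⟨ha, hb⟩, rfl⟩)
        · exact Set.mem_insert_of_mem _ (Or.inr ⟨k, ⟨ha, hb⟩, rfl⟩)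
    · rw [Fin.sum_univ_castSucc]
      simp only [Fin.snoc_castSucc, Fin.snoc_last]
      have key : ∀ k : Fin d,
          (if k = i then 0 else if dot (vstar k) w = 0 then dot a (v k)
            else dot (vstar k) w * dot a (v k)) •
          (if k = i then -(u i) else if dot (vstar k) w = 0 then u k else u k - u i)
          = dot a (v k) • vstar k
            - (dot a (v k) * dot (vstar k) w / dot (vstar i) w) • vstar i := by
        intro k
        by_cases hk : k = i
        · subst hk
          rw [if_pos rfl, if_pos rfl, zero_smul, mul_div_assoc, div_self hwir, mul_one,
            sub_self]
        · rw [if_neg hk, if_neg hk]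
          by_cases h0 : dot (vstar k) w = 0
          · rw [if_pos h0, if_pos h0, hu k, if_pos h0, h0, mul_zero, zero_div, zero_smul,
              sub_zero]
          · rw [if_neg h0, if_neg h0, hu k, if_neg h0, hui, smul_sub, smul_smul, smul_smul]
            congr 2
            · field_simp
            · field_simp
      rw [Finset.sum_congr rfl fun k _ => key k, Finset.sum_sub_distrib, ← Finset.sum_smul,
        ← Finset.sum_div, ← hdaw, hrepr1 a, hui, smul_neg, smul_smul]
      funext t
      simp only [Pi.add_apply, Pi.sub_apply, Pi.smul_apply, Pi.neg_apply, smul_eq_mul]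
      field_simp
      ring
  · -- reverse inclusion
    rintro ⟨n, c, y, hc, hy, rfl⟩ s hs
    obtain ⟨k, rfl⟩ := hs
    rw [dot_comm', dot_sum_smul]
    apply Finset.sum_nonneg
    intro j _
    apply mul_nonneg (hc j)
    rw [dot_comm']
    have hgen : ∀ g, g ∈ insert (-(u i))
        ((u '' {l | l ≠ i ∧ dot (vstar l) w = 0}) ∪
          ((fun r => u r - u i) '' {r | r ≠ i ∧ dot (vstar r) w ≠ 0})) →
        0 ≤ dot g (Function.update v i (-w) k) := by
      rintro g (rfl | ⟨l, ⟨hl, hl0⟩, rfl⟩ | ⟨r, ⟨hr, hr0⟩, rfl⟩)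
      · rw [hupd]
        by_cases hk : k = i
        · rw [if_pos hk, hui, dot_neg_left', dot_neg_right', dot_smul_left', neg_neg]
          rw [inv_mul_cancel₀ hwir]
          norm_num
        · rw [if_neg hk, hui, dot_neg_left', dot_smul_left', hdual, if_neg (by
            intro hik; exact hk hik.symm)]
          simp
      · rw [hupd, hu l, if_pos hl0]
        by_cases hk : k = i
        · rw [if_pos hk, dot_neg_right', hl0]; norm_num
        · rw [if_neg hk, hdual]; split <;> norm_num
      · dsimp only
        have hrpos : 0 < dot (vstar r) w := lt_of_le_of_ne (hwk r) (Ne.symm hr0)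
        rw [hupd, hu r, if_neg hr0, hui, dot_sub_left']
        by_cases hk : k = i
        · rw [if_pos hk, dot_neg_right', dot_neg_right', dot_smul_left', dot_smul_left',
            inv_mul_cancel₀ hr0, inv_mul_cancel₀ hwir]
          norm_num
        · rw [if_neg hk, dot_smul_left', dot_smul_left', hdual, hdual,
            if_neg (show ¬ (i = k) from fun hik => hk hik.symm)]
          split
          · simp [le_of_lt (inv_pos.mpr hrpos)]
          · simp
    exact hgen (y j) (hy j)
end

section
/- Let $\sigma \subset \mathbb{R}^3$ be the cone generated by $v_1 = (1,0,0)$, $v_2 = (0,1,0)$, $v_3 = (1,p,q)$ where $1 \leq p < q$ and $\gcd(p,q) = 1$, and let $N = \mathbb{Z}^3$. For $1 \leq k \leq q-1$ define $m_k = \min\{l \in \mathbb{Z}_{>0} : lq > kp\}$. Then the Hilbert basis of the monoid $\sigma \cap N$ (i.e., its unique minimal generating set) equals $\{v_1, v_2, v_3\} \cup \{(1, m_k, k) : 1 \leq k \leq q-1\}$. -/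
set_option linter.unnecessarySeqFocus false
set_option linter.unusedTactic false
set_option linter.unreachableTactic false
set_option linter.unusedVariables false

/-- Membership of an integral point in the cone generated by
`(1,0,0), (0,1,0), (1,p,q)`. -/
def inSigma (p q : ℤ) (x : Fin 3 → ℤ) : Prop :=
  (fun i => (x i : ℝ)) ∈
    coneOf {![1, 0, 0], ![0, 1, 0], ![1, (p : ℝ), (q : ℝ)]}

lemma inSigma_iff (p q : ℤ) (hq : 0 < q) (x : Fin 3 → ℤ) :
    inSigma p q x ↔ 0 ≤ x 2 ∧ x 2 ≤ q * x 0 ∧ p * x 2 ≤ q * x 1 := by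
  have hq' : (0:ℝ) < (q:ℝ) := by exact_mod_cast hq
  constructor
  · rintro ⟨n, c, y, hc, hy, hx⟩
    have key : ∀ (a : Fin 3 → ℝ),
        (∀ v ∈ ({![1,0,0], ![0,1,0], ![1,(p:ℝ),(q:ℝ)]} : Set (Fin 3 → ℝ)),
          0 ≤ ∑ i, a i * v i) → 0 ≤ ∑ i, a i * (x i : ℝ) := by
      intro a ha
      have hrw : ∑ i, a i * (x i:ℝ) = ∑ j, c j * ∑ i, a i * y j i := by
        have : ∀ i, (x i : ℝ) = ∑ j, c j * y j i := by
          intro i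
          have := congrFun hx i
          simpa [Finset.sum_apply] using this
        simp only [this, Finset.mul_sum]
        rw [Finset.sum_comm]
        congr 1; ext j; congr 1; ext i; ring
      rw [hrw]
      exact Finset.sum_nonneg fun j _ => mul_nonneg (hc j) (ha _ (hy j))
    have k1 := key ![0,0,1] (by
      rintro v (rfl | rfl | rfl) <;> norm_num [Fin.sum_univ_three, Matrix.cons_val_two, Matrix.tail_cons, Matrix.head_cons] <;> positivity)
    have k2 := key ![(q:ℝ),0,-1] (by
      rintro v (rfl | rfl | rfl) <;> norm_num [Fin.sum_univ_three, Matrix.cons_val_two, Matrix.tail_cons, Matrix.head_cons] <;> positivity)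
    have k3 := key ![0,(q:ℝ),-(p:ℝ)] (by
      rintro v (rfl | rfl | rfl) <;> norm_num [Fin.sum_univ_three, Matrix.cons_val_two, Matrix.tail_cons, Matrix.head_cons] <;> nlinarith)
    simp only [Fin.sum_univ_three, Matrix.cons_val_zero, Matrix.cons_val_one,
      Matrix.head_cons, Matrix.cons_val_two, Matrix.tail_cons] at k1 k2 k3
    refine ⟨by exact_mod_cast (by linarith : (0:ℝ) ≤ (x 2:ℝ)), ?_, ?_⟩
    · exact_mod_cast (by linarith : ((x 2:ℤ):ℝ) ≤ (q:ℝ) * (x 0:ℝ))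
    · exact_mod_cast (by linarith : ((p:ℝ)) * (x 2:ℝ) ≤ (q:ℝ) * (x 1:ℝ))
  · rintro ⟨h1, h2, h3⟩
    have h1' : (0:ℝ) ≤ (x 2:ℝ) := by exact_mod_cast h1
    have h2' : (x 2:ℝ) ≤ (q:ℝ) * (x 0:ℝ) := by exact_mod_cast h2
    have h3' : (p:ℝ) * (x 2:ℝ) ≤ (q:ℝ) * (x 1:ℝ) := by exact_mod_cast h3
    refine ⟨3, ![(x 0 : ℝ) - x 2 / q, (x 1:ℝ) - p * x 2 / q, (x 2:ℝ) / q],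
      ![![1,0,0], ![0,1,0], ![1,(p:ℝ),(q:ℝ)]], ?_, ?_, ?_⟩
    · intro j
      fin_cases j <;> simp
      · rw [div_le_iff₀ hq']; nlinarith [h2']
      · rw [div_le_iff₀ hq']; nlinarith [h3']
      · positivity
    · intro j; fin_cases j <;> simp [Set.mem_insert_iff]
    · funext i
      fin_cases i <;>
        simp [Fin.sum_univ_three] <;> field_simp <;> ring

lemma nn_cancel {q a : ℤ} (hq : 0 < q) (h : 0 ≤ q * a) : 0 ≤ a := by nlinarith

lemma strict_lemma (p q k w : ℤ) (hq : 0 < q) (hgcd : Int.gcd p q = 1)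
    (h1 : 1 ≤ k) (h2 : k ≤ q - 1) (h : p * k ≤ q * w) : p * k < q * w := by
  rcases lt_or_eq_of_le h with h' | h'
  · exact h'
  · exfalso
    have hco : IsCoprime q p := by
      rw [Int.isCoprime_iff_gcd_eq_one, Int.gcd_comm]; exact hgcd
    have hdvd : q ∣ k * p := ⟨w, by linarith⟩
    have : q ∣ k := hco.dvd_of_dvd_mul_right hdvd
    have := Int.le_of_dvd (by omega) this
    omega

/-- Irreducibility of points of the form `(1, B, C)`. -/
lemma irred_one (p q : ℤ) (hq : 0 < q) (B C : ℤ)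
    (hB : ∀ w : ℤ, p * C ≤ q * w → B ≤ w) :
    ¬∃ y z : Fin 3 → ℤ, (inSigma p q y ∧ y ≠ 0) ∧ (inSigma p q z ∧ z ≠ 0) ∧
      ![1, B, C] = y + z := by
  rintro ⟨y, z, ⟨hy, hy0⟩, ⟨hz, hz0⟩, hxyz⟩
  rw [inSigma_iff p q hq] at hy hz
  obtain ⟨hy2, hy02, hy12⟩ := hy
  obtain ⟨hz2, hz02, hz12⟩ := hz
  have e0 : y 0 + z 0 = 1 := by have := congrFun hxyz 0; simp at this; omega
  have e1 : y 1 + z 1 = B := by have := congrFun hxyz 1; simp at this; omega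
  have e2 : y 2 + z 2 = C := by have := congrFun hxyz 2; simp at this; omega
  have hy0n : 0 ≤ y 0 := nn_cancel hq (le_trans hy2 hy02)
  have hz0n : 0 ≤ z 0 := nn_cancel hq (le_trans hz2 hz02)
  have : y 0 = 0 ∨ z 0 = 0 := by omega
  rcases this with h | h
  · -- y = 0
    have hy2' : y 2 = 0 := by rw [h] at hy02; omega
    have hy1 : 0 ≤ y 1 := nn_cancel hq (by rw [hy2'] at hy12; simpa using hy12)
    have hz2' : z 2 = C := by omega
    have : B ≤ z 1 := hB (z 1) (by rw [hz2'] at hz12; exact hz12)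
    have hy1' : y 1 = 0 := by omega
    exact hy0 (funext fun i => by fin_cases i <;> simp [h, hy1', hy2'])
  · have hz2' : z 2 = 0 := by rw [h] at hz02; omega
    have hz1 : 0 ≤ z 1 := nn_cancel hq (by rw [hz2'] at hz12; simpa using hz12)
    have hy2' : y 2 = C := by omega
    have : B ≤ y 1 := hB (y 1) (by rw [hy2'] at hy12; exact hy12)
    have hz1' : z 1 = 0 := by omega
    exact hz0 (funext fun i => by fin_cases i <;> simp [h, hz1', hz2'])

lemma irred_v2 (p q : ℤ) (hq : 0 < q) :
    ¬∃ y z : Fin 3 → ℤ, (inSigma p q y ∧ y ≠ 0) ∧ (inSigma p q z ∧ z ≠ 0) ∧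
      ![0, 1, 0] = y + z := by
  rintro ⟨y, z, ⟨hy, hy0⟩, ⟨hz, hz0⟩, hxyz⟩
  rw [inSigma_iff p q hq] at hy hz
  obtain ⟨hy2, hy02, hy12⟩ := hy
  obtain ⟨hz2, hz02, hz12⟩ := hz
  have e0 : y 0 + z 0 = 0 := by have := congrFun hxyz 0; simp at this; omega
  have e1 : y 1 + z 1 = 1 := by have := congrFun hxyz 1; simp at this; omega
  have e2 : y 2 + z 2 = 0 := by have := congrFun hxyz 2; simp at this; omega
  have hy0n : 0 ≤ y 0 := nn_cancel hq (le_trans hy2 hy02)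
  have hz0n : 0 ≤ z 0 := nn_cancel hq (le_trans hz2 hz02)
  have hy2' : y 2 = 0 := by omega
  have hz2' : z 2 = 0 := by omega
  have hy1 : 0 ≤ y 1 := nn_cancel hq (by rw [hy2'] at hy12; simpa using hy12)
  have hz1 : 0 ≤ z 1 := nn_cancel hq (by rw [hz2'] at hz12; simpa using hz12)
  have : y 1 = 0 ∨ z 1 = 0 := by omega
  rcases this with h | h
  · exact hy0 (funext fun i => by fin_cases i <;> simp <;> omega)
  · exact hz0 (funext fun i => by fin_cases i <;> simp <;> omega)
theorem stmt_8 (p q : ℤ) (hp : 1 ≤ p) (hpq : p < q) (hgcd : Int.gcd p q = 1)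
    (m : ℤ → ℤ)
    (hm : ∀ k, 1 ≤ k → k ≤ q - 1 →
      0 < m k ∧ m k * q > k * p ∧ ∀ l : ℤ, 0 < l → l * q > k * p → m k ≤ l) :
    {x : Fin 3 → ℤ | inSigma p q x ∧ x ≠ 0 ∧
        ¬∃ y z : Fin 3 → ℤ, (inSigma p q y ∧ y ≠ 0) ∧ (inSigma p q z ∧ z ≠ 0) ∧
          x = y + z} =
      {![1, 0, 0], ![0, 1, 0], ![1, p, q]} ∪
        {x | ∃ k : ℤ, 1 ≤ k ∧ k ≤ q - 1 ∧ x = ![1, m k, k]} := by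
  have hq : 0 < q := by omega
  ext x
  simp only [Set.mem_setOf_eq, Set.mem_union, Set.mem_insert_iff,
    Set.mem_singleton_iff]
  constructor
  · rintro ⟨hx, hx0, hirr⟩
    rw [inSigma_iff p q hq] at hx
    obtain ⟨h1, h2, h3⟩ := hx
    by_cases hc : x 2 = 0
    · -- third coordinate zero
      rw [hc] at h2 h3
      have ha : 0 ≤ x 0 := nn_cancel hq h2
      have hb : 0 ≤ x 1 := nn_cancel hq (by simpa using h3)
      have hne : x 0 ≠ 0 ∨ x 1 ≠ 0 := by
        by_contra hcon
        push_neg at hcon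
        exact hx0 (funext fun i => by fin_cases i <;> simp [hcon.1, hcon.2, hc])
      by_cases ha1 : 1 ≤ x 0
      · by_cases hxv : x 0 = 1 ∧ x 1 = 0
        · left; left
          funext i; fin_cases i <;> simp [hxv.1, hxv.2, hc]
        · exfalso; apply hirr
          refine ⟨![1, 0, 0], ![x 0 - 1, x 1, 0], ⟨?_, ?_⟩, ⟨?_, ?_⟩, ?_⟩
          · rw [inSigma_iff p q hq]
            refine ⟨by simp, by simp; omega, by simp⟩
          · intro h; have := congrFun h 0; simp at this
          · rw [inSigma_iff p q hq]
            refine ⟨by simp, ?_, ?_⟩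
            · simp; exact mul_nonneg hq.le (by omega)
            · simp; exact mul_nonneg hq.le hb
          · intro h; apply hxv
            have h0 := congrFun h 0; have h1' := congrFun h 1
            simp at h0 h1'; omega
          · funext i; fin_cases i <;> simp <;> omega
      · have hx0z : x 0 = 0 := by omega
        have hb1 : 1 ≤ x 1 := by omega
        by_cases hxv : x 1 = 1
        · left; right; left
          funext i; fin_cases i <;> simp [hx0z, hxv, hc]
        · exfalso; apply hirr
          refine ⟨![0, 1, 0], ![0, x 1 - 1, 0], ⟨?_, ?_⟩, ⟨?_, ?_⟩, ?_⟩
          · rw [inSigma_iff p q hq]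
            refine ⟨by simp, by simp, by simp; omega⟩
          · intro h; have := congrFun h 1; simp at this
          · rw [inSigma_iff p q hq]
            refine ⟨by simp, by simp, ?_⟩
            · simp; exact mul_nonneg hq.le (by omega)
          · intro h; have := congrFun h 1; simp at this; omega
          · funext i; fin_cases i <;> simp [hx0z, hc] <;> omega
    · -- third coordinate positive
      have hc1 : 1 ≤ x 2 := by omega
      have ha1 : 1 ≤ x 0 := by nlinarith
      by_cases hcq : q ≤ x 2
      · by_cases hv3 : x = ![1, p, q]
        · left; right; right; exact hv3
        · exfalso; apply hirr
          refine ⟨![1, p, q], ![x 0 - 1, x 1 - p, x 2 - q], ⟨?_, ?_⟩, ⟨?_, ?_⟩, ?_⟩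
          · rw [inSigma_iff p q hq]
            refine ⟨by simp; omega, by simp, by simp [mul_comm]⟩
          · intro h; have := congrFun h 0; simp at this
          · rw [inSigma_iff p q hq]
            refine ⟨by simp; omega, ?_, ?_⟩
            · simp; nlinarith
            · simp; nlinarith
          · intro h; apply hv3
            have h0 := congrFun h 0; have h1' := congrFun h 1
            have h2' := congrFun h 2
            simp at h0 h1' h2'
            funext i; fin_cases i <;> simp <;> omega
          · funext i; fin_cases i <;> simp <;> omega
      · -- 1 ≤ x 2 ≤ q - 1
        have hk1 : 1 ≤ x 2 := hc1
        have hk2 : x 2 ≤ q - 1 := by omega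
        obtain ⟨hmp, hmq, hmmin⟩ := hm (x 2) hk1 hk2
        have hstrict : p * x 2 < q * x 1 :=
          strict_lemma p q (x 2) (x 1) hq hgcd hk1 hk2 h3
        have hx1pos : 0 < x 1 := by
          nlinarith [mul_pos (show (0:ℤ) < p by omega) (show (0:ℤ) < x 2 by omega)]
        have hble : m (x 2) ≤ x 1 := by
          apply hmmin (x 1) hx1pos
          rw [mul_comm (x 1) q, mul_comm (x 2) p]; exact hstrict
        by_cases hres : x 0 = 1 ∧ x 1 = m (x 2)
        · right
          exact ⟨x 2, hk1, hk2, by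
            funext i; fin_cases i <;> simp [hres.1, hres.2]⟩
        · exfalso; apply hirr
          refine ⟨![1, m (x 2), x 2], ![x 0 - 1, x 1 - m (x 2), 0],
            ⟨?_, ?_⟩, ⟨?_, ?_⟩, ?_⟩
          · rw [inSigma_iff p q hq]
            refine ⟨by simp; omega, by simp; omega, ?_⟩
            · simp; nlinarith [hmq]
          · intro h; have := congrFun h 0; simp at this
          · rw [inSigma_iff p q hq]
            refine ⟨by simp, ?_, ?_⟩
            · simp; exact mul_nonneg hq.le (by omega)
            · simp; exact mul_nonneg hq.le (by omega)
          · intro h; apply hres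
            have h0 := congrFun h 0; have h1' := congrFun h 1
            simp at h0 h1'; omega
          · funext i; fin_cases i <;> simp <;> omega
  · rintro ((rfl | rfl | rfl) | ⟨k, hk1, hk2, rfl⟩)
    · refine ⟨?_, ?_, ?_⟩
      · rw [inSigma_iff p q hq]
        refine ⟨by simp, by simp; omega, by simp⟩
      · intro h; have := congrFun h 0; simp at this
      · exact irred_one p q hq 0 0 (fun w hw => nn_cancel hq (by simpa using hw))
    · refine ⟨?_, ?_, ?_⟩
      · rw [inSigma_iff p q hq]
        refine ⟨by simp, by simp, by simp; omega⟩
      · intro h; have := congrFun h 1; simp at this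
      · exact irred_v2 p q hq
    · refine ⟨?_, ?_, ?_⟩
      · rw [inSigma_iff p q hq]
        refine ⟨by simp; omega, by simp, by simp [mul_comm]⟩
      · intro h; have := congrFun h 0; simp at this
      · exact irred_one p q hq p q (fun w hw => by nlinarith)
    · obtain ⟨hmp, hmq, hmmin⟩ := hm k hk1 hk2
      refine ⟨?_, ?_, ?_⟩
      · rw [inSigma_iff p q hq]
        refine ⟨by simp; omega, by simp; omega, by simp; nlinarith [hmq]⟩
      · intro h; have := congrFun h 0; simp at this
      · refine irred_one p q hq (m k) k (fun w hw => ?_)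
        have hs := strict_lemma p q k w hq hgcd hk1 hk2 hw
        have hwpos : 0 < w := by
          nlinarith [mul_pos (show (0:ℤ) < p by omega) (show (0:ℤ) < k by omega)]
        exact hmmin w hwpos (by rw [mul_comm w q, mul_comm k p]; exact hs)
end
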